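/- Let U be a set, (φ_k)_{k≥1} a sequence of functions φ_k : U → ℝ that is uniformly bounded and converges uniformly on U, let (û_n)_{n≥0} be a sequence of points of U, and let (k_n)_{n≥1} be a strictly increasing sequence of positive integers. Then lim_{m→∞} (1/m) Σ_{n=1}^m [φ_{k_n}(û_n) − φ_{k_n}(û_{n−1})] = 0. -/

import Mathlib

open Filter

/-- Averaging/telescoping step (equation (diminishingError) in Theorem 4.2):
if the functions `φ_k : U → ℝ` are uniformly bounded and converge uniformly on
`U`, `(û_n)` is any sequence in `U`, and `(k_n)` is a strictly increasing
sequence of positive integers, then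
`(1/m) Σ_{n=1}^m [φ_{k_n}(û_n) − φ_{k_n}(û_{n−1})] → 0`. -/
theorem average_incumbent_decrease_tendsto_zero {U : Type*}
    (φ : ℕ → U → ℝ)
    (hbdd : ∃ B : ℝ, ∀ k : ℕ, ∀ u : U, |φ k u| ≤ B)
    (hunif : ∃ ψ : U → ℝ, TendstoUniformly φ ψ atTop)
    (uhat : ℕ → U) (k : ℕ → ℕ) (hk : StrictMono k) (hkpos : ∀ n, 0 < k n) :
    Tendsto (fun m : ℕ =>
        (∑ n ∈ Finset.Icc 1 m, (φ (k n) (uhat n) - φ (k n) (uhat (n - 1)))) / m)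
      atTop (nhds 0) := by
  obtain ⟨B, hB⟩ := hbdd
  obtain ⟨ψ, hψ⟩ := hunif
  rw [Metric.tendstoUniformly_iff] at hψ
  -- ψ is bounded
  obtain ⟨K, hK⟩ : ∃ K : ℝ, ∀ u, |ψ u| ≤ K := by
    obtain ⟨N, hN⟩ := (hψ 1 one_pos).exists
    refine ⟨B + 1, fun u => ?_⟩
    have h1 := hN u
    have h2 := hB N u
    rw [Real.dist_eq] at h1
    calc |ψ u| ≤ |ψ u - φ N u| + |φ N u| := by
          have := abs_sub_abs_le_abs_sub (ψ u) (φ N u); linarith [abs_nonneg (φ N u)]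
      _ ≤ B + 1 := by linarith
  set e : ℕ → ℝ := fun n =>
    (φ (k n) (uhat n) - ψ (uhat n)) - (φ (k n) (uhat (n - 1)) - ψ (uhat (n - 1))) with he
  -- e tends to 0
  have he0 : Tendsto e atTop (nhds 0) := by
    rw [Metric.tendsto_atTop]
    intro ε hε
    obtain ⟨N, hN⟩ := (hψ (ε / 2) (by linarith)).exists_forall_of_atTop
    refine ⟨N, fun n hn => ?_⟩
    have hkn : N ≤ k n := le_trans hn (hk.le_apply)
    have h1 := hN (k n) hkn (uhat n)
    have h2 := hN (k n) hkn (uhat (n - 1))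
    rw [Real.dist_eq] at h1 h2
    rw [Real.dist_eq, sub_zero, he]
    have := abs_sub (ψ (uhat n) - φ (k n) (uhat n)) (ψ (uhat (n-1)) - φ (k n) (uhat (n-1)))
    calc |(φ (k n) (uhat n) - ψ (uhat n)) - (φ (k n) (uhat (n - 1)) - ψ (uhat (n - 1)))|
        ≤ |φ (k n) (uhat n) - ψ (uhat n)| + |φ (k n) (uhat (n - 1)) - ψ (uhat (n - 1))| :=
          abs_sub _ _
      _ < ε := by
          rw [abs_sub_comm (φ (k n) (uhat n)), abs_sub_comm (φ (k n) (uhat (n-1)))]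
          linarith
  -- telescoping decomposition
  have key : ∀ m : ℕ, (∑ n ∈ Finset.Icc 1 m, (φ (k n) (uhat n) - φ (k n) (uhat (n - 1))))
      = (∑ n ∈ Finset.Icc 1 m, e n) + (ψ (uhat m) - ψ (uhat 0)) := by
    intro m
    induction m with
    | zero => simp
    | succ m ih =>
        rw [Finset.sum_Icc_succ_top (by omega), Finset.sum_Icc_succ_top (by omega), ih, he]
        simp only [Nat.add_sub_cancel]
        ring
  have hfun : (fun m : ℕ =>
        (∑ n ∈ Finset.Icc 1 m, (φ (k n) (uhat n) - φ (k n) (uhat (n - 1)))) / m)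
      = fun m : ℕ => ((m : ℝ)⁻¹ • ∑ i ∈ Finset.range m, e (1 + i))
          + (ψ (uhat m) - ψ (uhat 0)) / m := by
    funext m
    rw [key m, ← Finset.Ico_add_one_right_eq_Icc, Finset.sum_Ico_eq_sum_range]
    simp only [Nat.succ_sub_one, Nat.add_sub_cancel, smul_eq_mul, div_eq_inv_mul]
    ring
  rw [hfun]
  have h1 : Tendsto (fun m : ℕ => (m : ℝ)⁻¹ • ∑ i ∈ Finset.range m, e (1 + i))
      atTop (nhds 0) := by
    refine Filter.Tendsto.cesaro ?_
    have := he0.comp (tendsto_add_atTop_nat 1)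
    simpa [Function.comp_def, add_comm] using this
  have h2 : Tendsto (fun m : ℕ => (ψ (uhat m) - ψ (uhat 0)) / m) atTop (nhds 0) := by
    apply squeeze_zero_norm (a := fun m : ℕ => (2 * K) / m)
    · intro m
      rcases Nat.eq_zero_or_pos m with hm | hm
      · subst hm; simp
      · rw [Real.norm_eq_abs, abs_div, abs_of_nonneg (by positivity : (0:ℝ) ≤ (m:ℝ))]
        apply div_le_div_of_nonneg_right ?_ (by positivity)
        calc |ψ (uhat m) - ψ (uhat 0)| ≤ |ψ (uhat m)| + |ψ (uhat 0)| := abs_sub _ _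
          _ ≤ 2 * K := by linarith [hK (uhat m), hK (uhat 0)]
    · exact tendsto_const_div_atTop_nhds_zero_nat (2 * K)
  simpa using h1.add h2
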